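/- Let G be a finite quasisimple group with generating set X containing a non-central element t. Define Y_m := {x_m⋯x_1 t x_1^{-1}⋯x_m^{-1} : x_i ∈ X ∪ {1}}. Then for any m ≥ log₂|G|, the set Y_m generates G, and every element of Y_m is a product of at most 2m+1 elements of X ∪ X^{-1}; consequently diam(Cay(G,X)) ≤ (2 log₂|G| + 1)·diam(Cay(G, Y_m)). -/

import Mathlib

/-- `g` is a product of at most `d` elements of `X ∪ X⁻¹`. -/
def WordLenLe {G : Type*} [Group G] (X : Set G) (d : ℕ) (g : G) : Prop :=
  ∃ l : List G, (∀ x ∈ l, x ∈ X ∨ x⁻¹ ∈ X) ∧ l.length ≤ d ∧ l.prod = g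

/-- The set `Y_m` of conjugates of `t` by products of at most `m` elements of `X ∪ {1}`. -/
def ConjSet {G : Type*} [Group G] (X : Set G) (t : G) (m : ℕ) : Set G :=
  {g : G | ∃ l : List G, l.length ≤ m ∧ (∀ x ∈ l, x ∈ X) ∧ g = l.prod * t * l.prod⁻¹}

section Aux

variable {G : Type*} [Group G]

lemma aux_wordLenLe_mono {X : Set G} {d d' : ℕ} {g : G} (h : WordLenLe X d g) (hd : d ≤ d') :
    WordLenLe X d' g := by
  obtain ⟨l, h1, h2, h3⟩ := h
  exact ⟨l, h1, h2.trans hd, h3⟩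

lemma aux_wordLenLe_inv {X : Set G} {d : ℕ} {g : G} (h : WordLenLe X d g) :
    WordLenLe X d g⁻¹ := by
  obtain ⟨l, h1, h2, h3⟩ := h
  refine ⟨(l.map fun x => x⁻¹).reverse, ?_, by simpa using h2, by rw [← List.prod_inv_reverse, h3]⟩
  intro x hx
  simp only [List.mem_reverse, List.mem_map] at hx
  obtain ⟨y, hy, rfl⟩ := hx
  rcases h1 y hy with h | h
  · exact Or.inr (by simpa using h)
  · exact Or.inl h

lemma aux_wordLenLe_prod {X : Set G} {c : ℕ} :
    ∀ L : List G, (∀ y ∈ L, WordLenLe X c y) → WordLenLe X (c * L.length) L.prod := by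
  intro L
  induction L with
  | nil => exact fun _ => ⟨[], by simp, by simp, rfl⟩
  | cons y L ih =>
    intro h
    obtain ⟨l1, h11, h12, h13⟩ := h y List.mem_cons_self
    obtain ⟨l2, h21, h22, h23⟩ := ih fun z hz => h z (List.mem_cons_of_mem _ hz)
    refine ⟨l1 ++ l2, ?_, ?_, by rw [List.prod_append, h13, h23, List.prod_cons]⟩
    · intro x hx
      rcases List.mem_append.mp hx with hx | hx
      · exact h11 x hx
      · exact h21 x hx
    · rw [List.length_append, List.length_cons, Nat.mul_succ]
      omega

/-- A normal subgroup of a quasisimple group not contained in the center is everything. -/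
lemma aux_normal_eq_top (hperf : commutator G = ⊤)
    (hsimple : IsSimpleGroup (G ⧸ Subgroup.center G))
    (N : Subgroup G) (hN : N.Normal) (hNc : ¬ N ≤ Subgroup.center G) : N = ⊤ := by
  set π := QuotientGroup.mk' (Subgroup.center G) with hπ
  have hsurj : Function.Surjective π := QuotientGroup.mk'_surjective _
  have hmapnormal : (N.map π).Normal := hN.map π hsurj
  rcases hsimple.eq_bot_or_eq_top_of_normal (N.map π) hmapnormal with hbot | htop
  · exfalso
    apply hNc
    intro n hn
    have h1 : π n ∈ N.map π := Subgroup.mem_map_of_mem π hn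
    rw [hbot, Subgroup.mem_bot] at h1
    have h2 : n ∈ π.ker := h1
    rwa [QuotientGroup.ker_mk'] at h2
  · have hcomm : commutator G ≤ N := by
      rw [commutator_def, Subgroup.commutator_le]
      intro g _ h _
      -- decompose g and h
      have hdec : ∀ a : G, ∃ n ∈ N, ∃ z ∈ Subgroup.center G, a = n * z := by
        intro a
        have : π a ∈ N.map π := htop ▸ Subgroup.mem_top _
        obtain ⟨n, hn, hna⟩ := this
        refine ⟨n, hn, n⁻¹ * a, ?_, by group⟩
        have := (QuotientGroup.eq (a := n) (b := a)).mp hna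
        exact this
      obtain ⟨n, hn, z, hz, rfl⟩ := hdec g
      obtain ⟨n', hn', z', hz', rfl⟩ := hdec h
      have hzc := Subgroup.mem_center_iff.mp hz
      have hz'c := Subgroup.mem_center_iff.mp hz'
      have key : n * z * (n' * z') * (n * z)⁻¹ * (n' * z')⁻¹ = n * n' * n⁻¹ * n'⁻¹ := by
        have e1 : z * (n' * z') * z⁻¹ = n' * z' := by
          rw [← hzc (n' * z')]; group
        have e2 : z' * n⁻¹ * z'⁻¹ = n⁻¹ := by
          rw [← hz'c n⁻¹]; group
        calc n * z * (n' * z') * (n * z)⁻¹ * (n' * z')⁻¹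
            = n * (z * (n' * z') * z⁻¹) * n⁻¹ * (z'⁻¹ * n'⁻¹) := by group
          _ = n * (n' * z') * n⁻¹ * (z'⁻¹ * n'⁻¹) := by rw [e1]
          _ = n * n' * (z' * n⁻¹ * z'⁻¹) * n'⁻¹ := by group
          _ = n * n' * n⁻¹ * n'⁻¹ := by rw [e2]
      rw [commutatorElement_def, key]
      exact N.mul_mem (N.mul_mem (N.mul_mem hn hn') (N.inv_mem hn)) (N.inv_mem hn')
    rw [hperf] at hcomm
    exact top_le_iff.mp hcomm

lemma aux_card_double [Fintype G] {H K : Subgroup G} (h : H < K) :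
    2 * Nat.card H ≤ Nat.card K := by
  obtain ⟨j, hj⟩ := Subgroup.card_dvd_of_le h.le
  have hHpos : 0 < Nat.card H := Nat.card_pos
  have hKpos : 0 < Nat.card K := Nat.card_pos
  have hj2 : 2 ≤ j := by
    rcases Nat.lt_or_ge j 2 with hlt | hge
    · interval_cases j
      · omega
      · exfalso
        apply h.ne
        exact Subgroup.eq_of_le_of_card_ge h.le (by omega)
    · exact hge
  calc 2 * Nat.card H ≤ Nat.card H * j := by
        rw [mul_comm 2]; exact Nat.mul_le_mul_left _ hj2
    _ = Nat.card K := hj.symm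

end Aux

/-- Let `G` be a finite quasisimple group, `X` a generating set, `t ∈ X` non-central, and
`m ≥ log₂|G|`.  Then `Y_m = ConjSet X t m` generates `G`, every element of `Y_m` is a product
of at most `2m+1` elements of `X ∪ X⁻¹`, and consequently
`diam(Cay(G,X)) ≤ (2m+1)·diam(Cay(G,Y_m))`. -/
theorem quasisimple_conjugates_generate {G : Type*} [Group G] [Fintype G]
    (hperf : commutator G = ⊤)
    (hsimple : IsSimpleGroup (G ⧸ Subgroup.center G))
    (X : Set G) (hX : Subgroup.closure X = ⊤)
    (t : G) (ht : t ∈ X) (htnc : t ∉ Subgroup.center G)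
    (m : ℕ) (hm : Real.logb 2 (Nat.card G) ≤ m) :
    Subgroup.closure (ConjSet X t m) = ⊤ ∧
    (∀ g ∈ ConjSet X t m, WordLenLe X (2 * m + 1) g) ∧
    (∀ D : ℕ, (∀ g : G, WordLenLe (ConjSet X t m) D g) →
      ∀ g : G, WordLenLe X ((2 * m + 1) * D) g) := by
  -- Part 2: word length bound
  have part2 : ∀ g ∈ ConjSet X t m, WordLenLe X (2 * m + 1) g := by
    rintro g ⟨l, hlen, hmem, rfl⟩
    refine ⟨l ++ t :: (l.map fun x => x⁻¹).reverse, ?_, ?_, ?_⟩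
    · intro x hx
      rcases List.mem_append.mp hx with hx | hx
      · exact Or.inl (hmem x hx)
      · rcases List.mem_cons.mp hx with rfl | hx
        · exact Or.inl ht
        · simp only [List.mem_reverse, List.mem_map] at hx
          obtain ⟨y, hy, rfl⟩ := hx
          exact Or.inr (by simpa using hmem y hy)
    · simp only [List.length_append, List.length_cons, List.length_reverse, List.length_map]
      omega
    · rw [List.prod_append, List.prod_cons, ← List.prod_inv_reverse]
      group
  -- t is in every ConjSet
  have htmem : ∀ k, t ∈ ConjSet X t k := fun k => ⟨[], by simp, by simp, by simp⟩
  -- Part 1: generation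
  set Hs : ℕ → Subgroup G := fun k => Subgroup.closure (ConjSet X t k) with hHs
  have hmono : ∀ k, Hs k ≤ Hs (k + 1) := by
    intro k
    apply Subgroup.closure_mono
    rintro g ⟨l, hlen, hmem, rfl⟩
    exact ⟨l, hlen.trans (Nat.le_succ k), hmem, rfl⟩
  have hstep : ∀ k, Hs k = Hs (k + 1) → Hs k = ⊤ := by
    intro k hk
    have hnormal : (Hs k).Normal := by
      rw [← Subgroup.normalizer_eq_top_iff, ← top_le_iff, ← hX]
      rw [Subgroup.closure_le]
      intro x hx
      have hmapeq : (Hs k).map (MulAut.conj x).toMonoidHom = Hs k := by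
        have hle : (Hs k).map (MulAut.conj x).toMonoidHom ≤ Hs k := by
          have e : (Hs k).map (MulAut.conj x).toMonoidHom
              = Subgroup.closure ((MulAut.conj x).toMonoidHom '' ConjSet X t k) :=
            MonoidHom.map_closure _ _
          rw [e]
          have e2 : Subgroup.closure (ConjSet X t (k+1)) = Hs k := hk.symm
          rw [← e2]
          apply Subgroup.closure_mono
          rintro g ⟨g', ⟨l, hlen, hmem, rfl⟩, rfl⟩
          refine ⟨x :: l, by simpa using hlen, ?_, ?_⟩
          · intro y hy
            rcases List.mem_cons.mp hy with rfl | hy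
            · exact hx
            · exact hmem y hy
          · simp only [List.prod_cons, MulEquiv.coe_toMonoidHom, MulAut.conj_apply,
              mul_inv_rev]
            group
        refine Subgroup.eq_of_le_of_card_ge hle ?_
        exact le_of_eq (Nat.card_congr
          ((Hs k).equivMapOfInjective _ (MulAut.conj x).injective).toEquiv)
      show x ∈ Subgroup.normalizer (Hs k : Set G)
      rw [Subgroup.mem_normalizer_iff]
      intro h
      constructor
      · intro hh
        rw [← hmapeq]
        exact ⟨h, hh, rfl⟩
      · intro hh
        rw [← hmapeq] at hh
        obtain ⟨h', hh', heq⟩ := hh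
        simp only [MulEquiv.coe_toMonoidHom, MulAut.conj_apply] at heq
        have : h' = h := by
          exact mul_left_cancel (mul_right_cancel heq)
        rwa [← this]
    refine aux_normal_eq_top hperf hsimple _ hnormal ?_
    intro hle
    exact htnc (hle (Subgroup.subset_closure (htmem k)))
  have hcard : ∀ k, Hs k = ⊤ ∨ 2 ^ (k + 1) ≤ Nat.card (Hs k) := by
    intro k
    induction k with
    | zero =>
      right
      have hne : Hs 0 ≠ ⊥ := by
        intro hbot
        have : t ∈ Hs 0 := Subgroup.subset_closure (htmem 0)
        rw [hbot, Subgroup.mem_bot] at this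
        exact htnc (this ▸ Subgroup.one_mem _)
      have := (Subgroup.one_lt_card_iff_ne_bot (H := Hs 0)).mpr hne
      omega
    | succ k ih =>
      rcases ih with htop | hc
      · left
        rw [← top_le_iff, ← htop]
        exact hmono k
      · by_cases heq : Hs k = Hs (k + 1)
        · left
          rw [← heq]
          exact hstep k heq
        · right
          have hlt : Hs k < Hs (k + 1) := lt_of_le_of_ne (hmono k) heq
          calc 2 ^ (k + 2) = 2 * 2 ^ (k + 1) := by ring
            _ ≤ 2 * Nat.card (Hs k) := by omega
            _ ≤ Nat.card (Hs (k + 1)) := aux_card_double hlt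
  have part1 : Hs m = ⊤ := by
    rcases hcard m with h | h
    · exact h
    · exfalso
      have hGpos : 0 < Nat.card G := Nat.card_pos
      have hG2m : (Nat.card G : ℝ) ≤ 2 ^ (m : ℝ) := by
        rw [← Real.logb_le_iff_le_rpow (by norm_num) (by exact_mod_cast hGpos)]
        exact hm
      have hG2m' : Nat.card G ≤ 2 ^ m := by
        have : (2 : ℝ) ^ (m : ℝ) = ((2 ^ m : ℕ) : ℝ) := by
          rw [Real.rpow_natCast]; push_cast; ring
        rw [this] at hG2m
        exact_mod_cast hG2m
      have hle : Nat.card (Hs m) ≤ Nat.card G := Subgroup.card_le_card_group _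
      have : 2 ^ (m + 1) ≤ 2 ^ m := le_trans h (le_trans hle hG2m')
      have h2 : 2 ^ m < 2 ^ (m + 1) := Nat.pow_lt_pow_succ (by norm_num)
      omega
  refine ⟨part1, part2, ?_⟩
  -- Part 3
  intro D hD g
  obtain ⟨l, hmeml, hlenl, hprodl⟩ := hD g
  have hall : ∀ y ∈ l, WordLenLe X (2 * m + 1) y := by
    intro y hy
    rcases hmeml y hy with h | h
    · exact part2 y h
    · have := aux_wordLenLe_inv (part2 y⁻¹ h)
      rwa [inv_inv] at this
  have := aux_wordLenLe_prod l hall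
  rw [hprodl] at this
  exact aux_wordLenLe_mono this (Nat.mul_le_mul_left _ hlenl)
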